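/- A finite-outcome measurement A = (a_x)_{x∈X} on a state space S is intersubjective (1-intersubjective) if and only if it is sharp (1-sharp). That is: every joint measurement B of A with itself satisfies ∑_x b_{x,x} = 1_S if and only if for all x ≠ x', the only effect b with b ≤ a_x and b ≤ a_{x'} is the zero effect. -/
import Mathlib


open Finset

/-- An effect on the state space `S`: an affine map taking values in `[0,1]` on `S`. -/
def IsEffect {V : Type*} [AddCommGroup V] [Module ℝ V] (S : Set V) (a : V →ᵃ[ℝ] ℝ) : Prop :=
  ∀ s ∈ S, 0 ≤ a s ∧ a s ≤ 1

/-- A finite-outcome measurement: a family of effects summing to the unit effect on `S`. -/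
def IsMeasurement {V : Type*} [AddCommGroup V] [Module ℝ V] (S : Set V) {X : Type*} [Fintype X]
    (A : X → (V →ᵃ[ℝ] ℝ)) : Prop :=
  (∀ x, IsEffect S (A x)) ∧ ∀ s ∈ S, ∑ x, A x s = 1

/-- A joint measurement of `A` and `B`: a measurement on `X × Y` whose marginals are `A`, `B`. -/
def IsJointMeasurement {V : Type*} [AddCommGroup V] [Module ℝ V] (S : Set V)
    {X Y : Type*} [Fintype X] [Fintype Y]
    (A : X → (V →ᵃ[ℝ] ℝ)) (B : Y → (V →ᵃ[ℝ] ℝ)) (C : X × Y → (V →ᵃ[ℝ] ℝ)) : Prop :=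
  IsMeasurement S C ∧ (∀ x, ∀ s ∈ S, ∑ y, C (x, y) s = A x s) ∧
    (∀ y, ∀ s ∈ S, ∑ x, C (x, y) s = B y s)

/-- `A` is `α`-intersubjective: every joint measurement of `A` with itself has diagonal
weight at least `α · 1_S`. -/
def Intersubjective {V : Type*} [AddCommGroup V] [Module ℝ V] (S : Set V) {X : Type*} [Fintype X]
    (α : ℝ) (A : X → (V →ᵃ[ℝ] ℝ)) : Prop :=
  ∀ C : X × X → (V →ᵃ[ℝ] ℝ), IsJointMeasurement S A A C → ∀ s ∈ S, α ≤ ∑ x, C (x, x) s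

/-- `A` is `α`-sharp: for distinct outcomes `x ≠ x'`, any effect below both `A x` and `A x'`
is below `(1 - α) · 1_S`. -/
def SharpMeasurement {V : Type*} [AddCommGroup V] [Module ℝ V] (S : Set V) {X : Type*} [Fintype X]
    (α : ℝ) (A : X → (V →ᵃ[ℝ] ℝ)) : Prop :=
  ∀ x x', x ≠ x' → ∀ b : V →ᵃ[ℝ] ℝ, IsEffect S b → (∀ s ∈ S, b s ≤ A x s) →
    (∀ s ∈ S, b s ≤ A x' s) → ∀ s ∈ S, b s ≤ 1 - α


/-- a measurement is intersubjective (every joint measurement of it with itself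
has diagonal summing to `1_S`) iff it is sharp (for distinct outcomes, the only common
lower-bound effect is zero). -/
theorem intersubjective_iff_sharp {V : Type*} [NormedAddCommGroup V] [NormedSpace ℝ V]
    (S : Set V) (hSconv : Convex ℝ S) (hScomp : IsCompact S)
    {X : Type*} [Fintype X] (A : X → (V →ᵃ[ℝ] ℝ)) (hA : IsMeasurement S A) :
    (∀ B : X × X → (V →ᵃ[ℝ] ℝ), IsJointMeasurement S A A B →
        ∀ s ∈ S, ∑ x, B (x, x) s = 1) ↔
      (∀ x x', x ≠ x' → ∀ b : V →ᵃ[ℝ] ℝ, IsEffect S b → (∀ s ∈ S, b s ≤ A x s) →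
        (∀ s ∈ S, b s ≤ A x' s) → ∀ s ∈ S, b s = 0) := by
  classical
  constructor
  · intro h x x' hxx b hb hbx hbx' s hs
    set C : X × X → (V →ᵃ[ℝ] ℝ) := fun p =>
      (if p.1 = p.2 then A p.1 else 0) + (if p = (x, x') then b else 0)
        + (if p = (x', x) then b else 0) - (if p = (x, x) then b else 0)
        - (if p = (x', x') then b else 0) with hC
    have hCeval : ∀ p t, C p t = (if p.1 = p.2 then A p.1 t else 0)
        + (if p = (x, x') then b t else 0) + (if p = (x', x) then b t else 0)
        - (if p = (x, x) then b t else 0) - (if p = (x', x') then b t else 0) := by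
      intro p t
      simp only [hC, AffineMap.coe_sub, AffineMap.coe_add, Pi.sub_apply, Pi.add_apply,
        apply_ite (fun g : V →ᵃ[ℝ] ℝ => g t), AffineMap.coe_zero, Pi.zero_apply]
    have hJ : IsJointMeasurement S A A C := by
      refine ⟨⟨?_, ?_⟩, ?_, ?_⟩
      · intro p t ht
        rcases hb t ht with ⟨hb0, hb1⟩
        by_cases h1 : p = (x, x')
        · subst h1
          simp only [hCeval]
          have : ¬ (x = x') := hxx
          simp [this, Prod.ext_iff, Ne.symm hxx]
          exact ⟨hb0, hb1⟩
        · by_cases h2 : p = (x', x)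
          · subst h2
            simp only [hCeval]
            simp [Prod.ext_iff, hxx, Ne.symm hxx]
            exact ⟨hb0, hb1⟩
          · by_cases h3 : p = (x, x)
            · subst h3
              simp only [hCeval]
              simp [Prod.ext_iff, hxx, Ne.symm hxx]
              rcases (hA.1 x) t ht with ⟨_, hx1⟩
              constructor
              · linarith [hbx t ht]
              · linarith
            · by_cases h4 : p = (x', x')
              · subst h4
                simp only [hCeval]
                simp [Prod.ext_iff, hxx, Ne.symm hxx]
                rcases (hA.1 x') t ht with ⟨_, hx1⟩
                constructor
                · linarith [hbx' t ht]
                · linarith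
              · by_cases h5 : p.1 = p.2
                · simp only [hCeval, if_pos h5, if_neg h1, if_neg h2, if_neg h3, if_neg h4]
                  simpa using (hA.1 p.1) t ht
                · simp [hCeval, h1, h2, h3, h4, h5]
      · intro t ht
        simp only [hCeval, Finset.sum_sub_distrib, Finset.sum_add_distrib]
        rw [Fintype.sum_prod_type]
        simp [Finset.sum_ite_eq, hA.2 t ht]
      · intro x0 t ht
        simp only [hCeval, Finset.sum_sub_distrib, Finset.sum_add_distrib, Prod.mk.injEq,
          ite_and, Finset.sum_ite_eq', Finset.mem_univ, if_true]
        by_cases h1 : x0 = x <;> by_cases h2 : x0 = x' <;>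
          simp [h1, h2, Finset.sum_ite_eq'] <;> ring
      · intro y0 t ht
        simp only [hCeval, Prod.mk.injEq]
        have : ∀ x1, (if x1 = y0 then A x1 t else 0) = (if x1 = y0 then A y0 t else 0) := by
          intro x1; by_cases h : x1 = y0 <;> simp [h]
        simp only [this]
        simp only [Finset.sum_sub_distrib, Finset.sum_add_distrib, ite_and]
        by_cases h1 : y0 = x' <;> by_cases h2 : y0 = x <;>
          simp [h1, h2, Finset.sum_ite_eq', hxx, Ne.symm hxx, Finset.sum_ite_eq] <;> ring
    have hdiag := h C hJ s hs
    have : ∑ x0, C (x0, x0) s = (∑ x0, A x0 s) - b s - b s := by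
      simp only [hCeval]
      simp only [Prod.mk.injEq, ite_and]
      rw [Finset.sum_sub_distrib, Finset.sum_sub_distrib, Finset.sum_add_distrib,
        Finset.sum_add_distrib]
      have e1 : ∑ x0, (if x0 = x then if x0 = x' then b s else 0 else 0) = 0 := by
        apply Finset.sum_eq_zero; intro x0 _
        by_cases h1 : x0 = x <;> by_cases h2 : x0 = x' <;> simp [h1, h2, hxx, Ne.symm hxx]
      have e2 : ∑ x0, (if x0 = x' then if x0 = x then b s else 0 else 0) = 0 := by
        apply Finset.sum_eq_zero; intro x0 _
        by_cases h1 : x0 = x' <;> by_cases h2 : x0 = x <;> simp [h1, h2, hxx, Ne.symm hxx]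
      simp [e1, e2, Finset.sum_ite_eq']
    rw [this, hA.2 s hs] at hdiag
    linarith
  · intro h B hB s hs
    obtain ⟨⟨hBeff, _⟩, hrow, hcol⟩ := hB
    have hoff : ∀ x y, x ≠ y → ∀ t ∈ S, B (x, y) t = 0 := by
      intro x y hxy t ht
      refine h x y hxy (B (x, y)) (hBeff _) ?_ ?_ t ht
      · intro u hu
        rw [← hrow x u hu]
        exact Finset.single_le_sum (fun z _ => (hBeff (x, z) u hu).1) (Finset.mem_univ y)
      · intro u hu
        rw [← hcol y u hu]
        exact Finset.single_le_sum (fun z _ => (hBeff (z, y) u hu).1) (Finset.mem_univ x)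
    have hdiag : ∀ x, B (x, x) s = A x s := by
      intro x
      have := hrow x s hs
      rw [← this]
      rw [← Finset.add_sum_erase _ _ (Finset.mem_univ x)]
      have : ∑ y ∈ Finset.univ.erase x, B (x, y) s = 0 := by
        apply Finset.sum_eq_zero
        intro y hy
        exact hoff x y (fun h => (Finset.mem_erase.mp hy).1 h.symm) s hs
      rw [this, add_zero]
    simp only [hdiag]
    exact hA.2 s hs
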